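/- Let p, w ∈ AP₊(ℝ,ℝ) and q : ℝ → ℝ Bohr almost periodic, with v = (1/p, q, w), and fix λ ∈ ℝ. Let φ : ℝ → ℝ be a nontrivial solution of −(pφ')' + qφ = λwφ. Then for every x > 0 the set {s ∈ [0,x) : φ(s) = 0} is finite, and lim_{x→+∞} π·#{s ∈ [0,x) : φ(s) = 0} / x = ρ(λ, v); in particular the limit exists and is independent of the choice of nontrivial solution φ. -/

import Mathlib

open Filter Topology MeasureTheory Set

noncomputable section

/-- A continuous function `f : ℝ → E` is Bohr almost periodic if every sequence of reals
has a subsequence along which the translates converge uniformly on `ℝ`. -/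
def BohrAP {E : Type*} [NormedAddCommGroup E] (f : ℝ → E) : Prop :=
  Continuous f ∧ ∀ t : ℕ → ℝ, ∃ (s : ℕ → ℕ) (g : ℝ → E),
    StrictMono s ∧ TendstoUniformly (fun n x => f (x + t (s n))) g atTop

/-- The hull of `f`: uniform limits of sequences of translates of `f`. -/
def Hull {E : Type*} [NormedAddCommGroup E] (f : ℝ → E) : Set (ℝ → E) :=
  {g | ∃ t : ℕ → ℝ, TendstoUniformly (fun n x => f (x + t n)) g atTop}

/-- `AP₊(ℝ,ℝ)`: Bohr almost periodic functions all of whose hull elements are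
strictly positive at every point. -/
def APplus (f : ℝ → ℝ) : Prop :=
  BohrAP f ∧ ∀ g ∈ Hull f, ∀ x : ℝ, 0 < g x

/-- The set of Fourier exponents of `f`: those `l` for which the Fourier coefficient
`lim_{T→∞} (1/T) ∫₀^T f(x) e^{-i l x} dx` is nonzero (encoded as: the averages do not
tend to `0`; for Bohr almost periodic `f` the limit always exists). -/
def freqSet (f : ℝ → ℝ) : Set ℝ :=
  {l : ℝ | ¬ Tendsto
      (fun T : ℝ => (T : ℂ)⁻¹ *
        ∫ x in (0:ℝ)..T, (f x : ℂ) * Complex.exp (-(Complex.I * (l : ℂ) * (x : ℂ))))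
      atTop (𝓝 0)}

/-- The frequency module of `f`: the smallest additive subgroup of `ℝ` containing the
Fourier exponents of `f`. -/
def freqModule (f : ℝ → ℝ) : AddSubgroup ℝ := AddSubgroup.closure (freqSet f)

/-- `θ` solves the Prüfer equation `θ' = a cos²θ + (λ w - q) sin²θ`. -/
def IsPruefer (a q w : ℝ → ℝ) (lam : ℝ) (θ : ℝ → ℝ) : Prop :=
  ∀ x : ℝ, HasDerivAt θ
    (a x * Real.cos (θ x) ^ 2 + (lam * w x - q x) * Real.sin (θ x) ^ 2) x

/-- `φ` is a (real) solution of the Sturm–Liouville equation `-(pφ')' + qφ = λ w φ`: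
`φ` is `C¹`, `pφ'` is `C¹`, and the equation holds everywhere. -/
def IsSLSolution (p q w : ℝ → ℝ) (lam : ℝ) (φ : ℝ → ℝ) : Prop :=
  ContDiff ℝ 1 φ ∧ ContDiff ℝ 1 (fun x => p x * deriv φ x) ∧
    ∀ x : ℝ, -(deriv (fun y => p y * deriv φ y) x) + q x * φ x = lam * w x * φ x

lemma ode_unique_global {E : Type*} [NormedAddCommGroup E] [NormedSpace ℝ E]
    {v : ℝ → E → E} (hK : ∀ a b : ℝ, ∃ K : NNReal, ∀ t ∈ Set.Icc a b, LipschitzWith K (v t))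
    {f g : ℝ → E} (hf : ∀ t, HasDerivAt f (v t (f t)) t) (hg : ∀ t, HasDerivAt g (v t (g t)) t)
    {t₀ : ℝ} (heq : f t₀ = g t₀) : ∀ t, f t = g t := by
  intro t
  set a := min t t₀ - 1 with ha
  set b := max t t₀ + 1 with hb
  have hab : a < b := by
    have h1 : min t t₀ ≤ max t t₀ := le_trans (min_le_left _ _) (le_max_left _ _)
    simp only [ha, hb]; linarith
  obtain ⟨K, hKl⟩ := hK a b
  set v' : ℝ → E → E := fun s => v (max a (min b s)) with hv'def
  have hmem : ∀ s : ℝ, max a (min b s) ∈ Set.Icc a b := by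
    intro s
    constructor
    · exact le_max_left _ _
    · exact max_le hab.le (min_le_left _ _)
  have hv' : ∀ s, LipschitzOnWith K (v' s) (Set.univ : Set E) :=
    fun s => (hKl _ (hmem s)).lipschitzOnWith
  have hveq : ∀ s ∈ Set.Ioo a b, v' s = v s := by
    intro s hs
    simp only [hv'def]
    rw [min_eq_right hs.2.le, max_eq_right hs.1.le]
  have ht0 : t₀ ∈ Set.Ioo a b := by
    constructor
    · simp only [ha]; have := min_le_right t t₀; linarith
    · simp only [hb]; have := le_max_right t t₀; linarith
  have key : Set.EqOn f g (Set.Icc a b) := by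
    apply ODE_solution_unique_of_mem_Icc (v := v') (s := fun _ => (Set.univ : Set E)) (fun s _ => hv' s) ht0
    · exact fun s _ => (hf s).continuousAt.continuousWithinAt
    · intro s hs; rw [hveq s hs]; exact hf s
    · intro s _; trivial
    · exact fun s _ => (hg s).continuousAt.continuousWithinAt
    · intro s hs; rw [hveq s hs]; exact hg s
    · intro s _; trivial
    · exact heq
  refine key ⟨?_, ?_⟩
  · simp only [ha]; have := min_le_left t t₀; linarith
  · simp only [hb]; have := le_max_left t t₀; linarith

lemma ode_comparison {v : ℝ → ℝ → ℝ}
    (hK : ∀ a b : ℝ, ∃ K : NNReal, ∀ t ∈ Set.Icc a b, LipschitzWith K (v t))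
    {f g : ℝ → ℝ} (hf : ∀ t, HasDerivAt f (v t (f t)) t) (hg : ∀ t, HasDerivAt g (v t (g t)) t)
    (h0 : f 0 ≤ g 0) : ∀ x, 0 ≤ x → f x ≤ g x := by
  intro x hx
  by_contra hlt
  push_neg at hlt
  have hfc : Continuous f := continuous_iff_continuousAt.mpr fun s => (hf s).continuousAt
  have hgc : Continuous g := continuous_iff_continuousAt.mpr fun s => (hg s).continuousAt
  have hx0 : 0 < x := by
    rcases eq_or_lt_of_le hx with h | h
    · exact absurd (h ▸ h0) (not_le.mpr hlt)
    · exact h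
  set S := {s | s ∈ Set.Icc (0:ℝ) x ∧ f s ≤ g s} with hS
  have hSclosed : IsClosed S := isClosed_Icc.inter (isClosed_le hfc hgc)
  have hSne : S.Nonempty := ⟨0, ⟨le_refl _, hx⟩, h0⟩
  have hSbdd : BddAbove S := ⟨x, fun s hs => hs.1.2⟩
  set c := sSup S with hc
  have hcS : c ∈ S := hSclosed.csSup_mem hSne hSbdd
  have hcx : c < x := by
    rcases lt_or_eq_of_le hcS.1.2 with h | h
    · exact h
    · exact absurd (h ▸ hcS.2) (not_le.mpr hlt)
  have hgt : ∀ s ∈ Set.Ioc c x, g s < f s := by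
    intro s hs
    by_contra hsle
    push_neg at hsle
    have : s ∈ S := ⟨⟨le_trans hcS.1.1 hs.1.le, hs.2⟩, hsle⟩
    exact absurd (le_csSup hSbdd this) (not_le.mpr hs.1)
  have hge : g c ≤ f c := by
    have h1 : Tendsto (fun s => f s - g s) (𝓝[>] c) (𝓝 (f c - g c)) :=
      ((hfc.sub hgc).tendsto c).mono_left nhdsWithin_le_nhds
    have h2 : ∀ᶠ s in 𝓝[>] c, 0 ≤ f s - g s := by
      filter_upwards [Ioc_mem_nhdsGT hcx] with s hs
      exact sub_nonneg.mpr (hgt s hs).le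
    exact sub_nonneg.mp (ge_of_tendsto h1 h2)
  have heqc : f c = g c := le_antisymm hcS.2 hge
  have := ode_unique_global hK hf hg heqc x
  exact absurd this (ne_of_gt hlt)

/-- If the derivative is positive whenever `sin θ = 0`, then `θ` strictly increases after any
point where `sin θ = 0`. -/
lemma cross_forward {θ d : ℝ → ℝ}
    (hd : ∀ s, HasDerivAt θ (d s) s)
    (hpos : ∀ s, Real.sin (θ s) = 0 → 0 < d s) :
    ∀ s t, s < t → Real.sin (θ s) = 0 → θ s < θ t := by
  have hcont : Continuous θ := continuous_iff_continuousAt.mpr fun s => (hd s).continuousAt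
  -- local increase to the right of a zero of sin∘θ
  have hloc : ∀ s, Real.sin (θ s) = 0 → ∀ᶠ u in 𝓝[>] s, θ s < θ u := by
    intro s hs
    have hsl : Tendsto (slope θ s) (𝓝[>] s) (𝓝 (d s)) :=
      (hasDerivAt_iff_tendsto_slope.mp (hd s)).mono_left
        (nhdsWithin_mono _ fun u hu => ne_of_gt hu)
    have hev : ∀ᶠ u in 𝓝[>] s, 0 < slope θ s u := hsl.eventually (eventually_gt_nhds (hpos s hs))
    filter_upwards [hev, self_mem_nhdsWithin] with u hu hu2
    have hus : 0 < u - s := sub_pos.mpr hu2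
    have h3 : 0 < (θ u - θ s) / (u - s) := by
      simpa [slope_def_field] using hu
    have h4 : 0 < θ u - θ s := by
      by_contra h5
      push_neg at h5
      have := div_nonpos_of_nonpos_of_nonneg h5 hus.le
      linarith
    linarith
  intro s t hst hs
  by_contra hle
  push_neg at hle
  -- t with θ t ≤ θ s
  set T := {u | u ∈ Set.Ioc s t ∧ θ u ≤ θ s} with hT
  have hTne : T.Nonempty := ⟨t, ⟨hst, le_refl t⟩, hle⟩
  have hTbdd : BddBelow T := ⟨s, fun u hu => hu.1.1.le⟩
  set c := sInf T with hc
  have hcclos : c ∈ closure T := csInf_mem_closure hTne hTbdd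
  have hTsub : T ⊆ Set.Icc s t ∩ {u | θ u ≤ θ s} :=
    fun u hu => ⟨Set.Ioc_subset_Icc_self hu.1, hu.2⟩
  have hclosed : IsClosed (Set.Icc s t ∩ {u | θ u ≤ θ s}) :=
    isClosed_Icc.inter (isClosed_le hcont continuous_const)
  have hcmem : c ∈ Set.Icc s t ∩ {u | θ u ≤ θ s} :=
    hclosed.closure_subset ((closure_mono hTsub) hcclos)
  have hcle : θ c ≤ θ s := hcmem.2
  -- c > s
  obtain ⟨ε, hε, hsub⟩ := mem_nhdsGT_iff_exists_Ioc_subset.mp (hloc s hs)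
  have hcgt : s < c := by
    have hlb : ∀ u ∈ T, min ε t ≤ u := by
      intro u hu
      by_contra hult
      push_neg at hult
      have hu1 : u ∈ Set.Ioc s ε := ⟨hu.1.1, le_of_lt (lt_of_lt_of_le hult (min_le_left _ _))⟩
      exact absurd hu.2 (not_le.mpr (hsub hu1))
    have := le_csInf hTne hlb
    calc s < min ε t := lt_min hε hst
    _ ≤ c := this
  -- θ u > θ s for u in (s, c)
  have hmid : ∀ u, s < u → u < c → θ s < θ u := by
    intro u hsu huc
    by_contra hle2
    push_neg at hle2
    have : u ∈ T := ⟨⟨hsu, le_trans huc.le hcmem.1.2⟩, hle2⟩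
    exact absurd (csInf_le hTbdd this) (not_le.mpr huc)
  -- θ c = θ s by continuity from the left
  have hcge : θ s ≤ θ c := by
    have h1 : Tendsto θ (𝓝[<] c) (𝓝 (θ c)) := (hcont.tendsto c).mono_left nhdsWithin_le_nhds
    refine ge_of_tendsto h1 ?_
    filter_upwards [Ioo_mem_nhdsLT hcgt] with u hu
    exact (hmid u hu.1 hu.2).le
  have hceq : θ c = θ s := le_antisymm hcle hcge
  -- derivative at c nonpositive from the left: contradiction
  have hdpos : 0 < d c := hpos c (hceq ▸ hs)
  have hsl : Tendsto (slope θ c) (𝓝[<] c) (𝓝 (d c)) :=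
    (hasDerivAt_iff_tendsto_slope.mp (hd c)).mono_left
      (nhdsWithin_mono _ fun u hu => ne_of_lt hu)
  have hneg : ∀ᶠ u in 𝓝[<] c, slope θ c u ≤ 0 := by
    filter_upwards [Ioo_mem_nhdsLT hcgt, self_mem_nhdsWithin] with u hu hu2
    have h1 : θ c < θ u := hceq ▸ hmid u hu.1 hu.2
    have h2 : u - c < 0 := sub_neg.mpr hu2
    have : slope θ c u = (θ u - θ c) / (u - c) := by simp [slope_def_field]
    rw [this]
    exact le_of_lt (div_neg_of_pos_of_neg (sub_pos.mpr h1) h2)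
  exact absurd (le_of_tendsto hsl hneg) (not_le.mpr hdpos)

lemma cross_backward {θ d : ℝ → ℝ}
    (hd : ∀ s, HasDerivAt θ (d s) s)
    (hpos : ∀ s, Real.sin (θ s) = 0 → 0 < d s) :
    ∀ s t, t < s → Real.sin (θ s) = 0 → θ t < θ s := by
  intro s t hts hs
  set θ' : ℝ → ℝ := fun u => -θ (-u) with hθ'
  have hd' : ∀ u, HasDerivAt θ' (d (-u)) u := by
    intro u
    have h1 : HasDerivAt (fun u : ℝ => θ (-u)) (d (-u) * (-1)) u :=
      (hd (-u)).comp u (hasDerivAt_neg u)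
    have := h1.neg
    have h2 : d (-u) = -(d (-u) * (-1)) := by ring
    rw [h2]
    exact this
  have hpos' : ∀ u, Real.sin (θ' u) = 0 → 0 < d (-u) := by
    intro u hu
    apply hpos (-u)
    have : Real.sin (-θ (-u)) = 0 := hu
    rwa [Real.sin_neg, neg_eq_zero] at this
  have hs' : Real.sin (θ' (-s)) = 0 := by
    simp only [hθ', neg_neg, Real.sin_neg, hs, neg_zero]
  have := cross_forward hd' hpos' (-s) (-t) (by linarith) hs'
  simp only [hθ', neg_neg] at this
  linarith

lemma polar_rep {z zd : ℝ → ℂ} (hz : ∀ x, HasDerivAt z (zd x) x)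
    (hzd : Continuous zd) (hz0 : ∀ x, z x ≠ 0) :
    ∃ θ R : ℝ → ℝ, (∀ x, 0 < R x) ∧ (∀ x, z x = R x * Complex.exp (Complex.I * θ x)) ∧
      ∀ x, HasDerivAt θ ((zd x / z x).im) x := by
  have hzc : Continuous z := continuous_iff_continuousAt.mpr fun s => (hz s).continuousAt
  set g : ℝ → ℂ := fun t => zd t / z t with hg_def
  have hg : Continuous g := hzd.div hzc hz0
  set W : ℝ → ℂ := fun x => ∫ t in (0:ℝ)..x, g t with hW_def
  have hW : ∀ x, HasDerivAt W (g x) x := fun x => (hg.integral_hasStrictDerivAt 0 x).hasDerivAt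
  have hW0 : W 0 = 0 := intervalIntegral.integral_same
  -- z x = z 0 * exp (W x)
  have hconst : ∀ x, z x * Complex.exp (-W x) = z 0 := by
    intro x
    have hder : ∀ y, HasDerivAt (fun u => z u * Complex.exp (-W u)) 0 y := by
      intro y
      have h1 : HasDerivAt (fun u => Complex.exp (-W u)) (Complex.exp (-W y) * (-g y)) y := by
        have := ((hW y).neg).cexp
        simpa [mul_comm] using this
      have h2 := (hz y).mul h1
      have hzy := hz0 y
      have e : z y * g y = zd y := mul_div_cancel₀ _ hzy
      have e2 : (0:ℂ) = zd y * Complex.exp (-W y) + z y * (Complex.exp (-W y) * -g y) := by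
        rw [← e]; ring
      rw [e2]
      exact h2
    have hdiff : Differentiable ℝ (fun u => z u * Complex.exp (-W u)) :=
      fun y => (hder y).differentiableAt
    have hdz : ∀ y, deriv (fun u => z u * Complex.exp (-W u)) y = 0 :=
      fun y => (hder y).deriv
    have := is_const_of_deriv_eq_zero hdiff hdz x 0
    rw [this, hW0]
    simp
  have hrep : ∀ x, z x = z 0 * Complex.exp (W x) := by
    intro x
    have := hconst x
    rw [← this]
    rw [mul_assoc, ← Complex.exp_add]
    simp
  set θ : ℝ → ℝ := fun x => Complex.arg (z 0) + (W x).im with hθ_def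
  set R : ℝ → ℝ := fun x => ‖z 0‖ * Real.exp ((W x).re) with hR_def
  refine ⟨θ, R, ?_, ?_, ?_⟩
  · intro x
    exact mul_pos (norm_pos_iff.mpr (hz0 0)) (Real.exp_pos _)
  · intro x
    rw [hrep x]
    rw [← Complex.norm_mul_exp_arg_mul_I (z 0)]
    simp only [hθ_def, hR_def]
    rw [mul_assoc, ← Complex.exp_add]
    push_cast
    rw [mul_assoc, ← Complex.exp_add]
    congr 1
    have hWx : (W x : ℂ) = ((W x).re : ℂ) + ((W x).im : ℂ) * Complex.I := (Complex.re_add_im (W x)).symm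
    conv_lhs => rw [hWx]
    ring
  · intro x
    have h1 : HasDerivAt (fun x => (W x).im) ((g x).im) x :=
      (Complex.imCLM.hasFDerivAt.comp_hasDerivAt x (hW x))
    have h2 := h1.const_add (Complex.arg (z 0))
    simpa [hθ_def] using h2

lemma pruefer_lipschitz {a b : ℝ → ℝ} (ha : Continuous a) (hb : Continuous b) :
    ∀ lo hi : ℝ, ∃ K : NNReal, ∀ t ∈ Set.Icc lo hi,
      LipschitzWith K (fun y => a t * Real.cos y ^ 2 + b t * Real.sin y ^ 2) := by
  intro lo hi
  obtain ⟨C, hC⟩ := (isCompact_Icc (a := lo) (b := hi)).exists_bound_of_continuousOn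
    ((ha.abs.add hb.abs).continuousOn)
  refine ⟨C.toNNReal, fun t ht => ?_⟩
  have hCt : |a t| + |b t| ≤ C := by
    have := hC t ht
    simp only [Real.norm_eq_abs, Pi.add_apply] at this
    rwa [abs_of_nonneg (add_nonneg (abs_nonneg (a t)) (abs_nonneg (b t)))] at this
  have hC0 : (0:ℝ) ≤ C := le_trans (by positivity) hCt
  set F : ℝ → ℝ := fun y => a t * Real.cos y ^ 2 + b t * Real.sin y ^ 2 with hF
  have hder : ∀ y, HasDerivAt F
      (a t * (2 * Real.cos y ^ 1 * (-Real.sin y)) + b t * (2 * Real.sin y ^ 1 * Real.cos y)) y := by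
    intro y
    exact (((Real.hasDerivAt_cos y).pow 2).const_mul (a t)).add
      (((Real.hasDerivAt_sin y).pow 2).const_mul (b t))
  have hdiff : Differentiable ℝ F := fun y => (hder y).differentiableAt
  apply lipschitzWith_of_nnnorm_deriv_le hdiff
  intro y
  rw [← NNReal.coe_le_coe, coe_nnnorm, Real.norm_eq_abs, Real.coe_toNNReal C hC0, (hder y).deriv]
  have h1 : |2 * Real.cos y * Real.sin y| ≤ 1 := by
    have e : 2 * Real.cos y * Real.sin y = Real.sin (2 * y) := by
      rw [Real.sin_two_mul]; ring
    rw [e]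
    exact abs_le.mpr ⟨Real.neg_one_le_sin _, Real.sin_le_one _⟩
  have e1 : a t * (2 * Real.cos y ^ 1 * (-Real.sin y)) + b t * (2 * Real.sin y ^ 1 * Real.cos y)
      = (b t - a t) * (2 * Real.cos y * Real.sin y) := by ring
  rw [e1, abs_mul]
  have h2 : |b t - a t| ≤ |a t| + |b t| := by
    have : b t - a t = b t + (-(a t)) := by ring
    rw [this]
    calc |b t + -(a t)| ≤ |b t| + |-(a t)| := abs_add_le _ _
      _ = |a t| + |b t| := by rw [abs_neg]; ring
  calc |b t - a t| * |2 * Real.cos y * Real.sin y| ≤ (|a t| + |b t|) * 1 :=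
        mul_le_mul h2 h1 (abs_nonneg _) (by positivity)
    _ = |a t| + |b t| := mul_one _
    _ ≤ C := hCt

lemma linear_field_lipschitz {a b : ℝ → ℝ} (ha : Continuous a) (hb : Continuous b) :
    ∀ lo hi : ℝ, ∃ K : NNReal, ∀ t ∈ Set.Icc lo hi,
      LipschitzWith K (fun y : ℂ => (↑(-(b t) * y.im) + ↑(a t * y.re) * Complex.I : ℂ)) := by
  intro lo hi
  obtain ⟨C, hC⟩ := (isCompact_Icc (a := lo) (b := hi)).exists_bound_of_continuousOn
    ((ha.abs.add hb.abs).continuousOn)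
  refine ⟨C.toNNReal, fun t ht => ?_⟩
  have hCt : |a t| + |b t| ≤ C := by
    have := hC t ht
    simp only [Real.norm_eq_abs, Pi.add_apply] at this
    rwa [abs_of_nonneg (add_nonneg (abs_nonneg (a t)) (abs_nonneg (b t)))] at this
  have hC0 : (0:ℝ) ≤ C := le_trans (by positivity) hCt
  apply LipschitzWith.of_dist_le_mul
  intro y₁ y₂
  rw [dist_eq_norm, dist_eq_norm, Real.coe_toNNReal C hC0]
  have e : ((↑(-(b t) * y₁.im) + ↑(a t * y₁.re) * Complex.I) -
        (↑(-(b t) * y₂.im) + ↑(a t * y₂.re) * Complex.I) : ℂ)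
      = (↑(-(b t) * (y₁ - y₂).im) + ↑(a t * (y₁ - y₂).re) * Complex.I : ℂ) := by
    simp only [Complex.sub_re, Complex.sub_im]
    push_cast
    ring
  rw [e]
  set d := y₁ - y₂ with hd
  calc ‖(↑(-(b t) * d.im) + ↑(a t * d.re) * Complex.I : ℂ)‖
      ≤ ‖(↑(-(b t) * d.im) : ℂ)‖ + ‖(↑(a t * d.re) * Complex.I : ℂ)‖ := norm_add_le _ _
    _ = |b t| * |d.im| + |a t| * |d.re| := by
        simp [Complex.norm_real, norm_mul, abs_mul]
    _ ≤ |b t| * ‖d‖ + |a t| * ‖d‖ := by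
        gcongr
        · exact Complex.abs_im_le_norm d
        · exact Complex.abs_re_le_norm d
    _ = (|a t| + |b t|) * ‖d‖ := by ring
    _ ≤ C * ‖d‖ := mul_le_mul_of_nonneg_right hCt (norm_nonneg _)

lemma zero_count_bound {θ d : ℝ → ℝ}
    (hd : ∀ s, HasDerivAt θ (d s) s)
    (hpos : ∀ s, Real.sin (θ s) = 0 → 0 < d s)
    {x : ℝ} (hx : 0 < x) :
    {s ∈ Set.Ico (0:ℝ) x | Real.sin (θ s) = 0}.Finite ∧
    |Real.pi * (({s ∈ Set.Ico (0:ℝ) x | Real.sin (θ s) = 0}).ncard : ℝ) - (θ x - θ 0)|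
      ≤ 2 * Real.pi := by
  have hcont : Continuous θ := continuous_iff_continuousAt.mpr fun s => (hd s).continuousAt
  have hfwd := cross_forward hd hpos
  have hbwd := cross_backward hd hpos
  set Z := {s ∈ Set.Ico (0:ℝ) x | Real.sin (θ s) = 0} with hZ
  set j : ℝ → ℤ := fun s => ⌊θ s / Real.pi⌋ with hj
  have hjval : ∀ s, Real.sin (θ s) = 0 → (j s : ℝ) * Real.pi = θ s := by
    intro s hs
    obtain ⟨n, hn⟩ := Real.sin_eq_zero_iff.mp hs
    have : θ s / Real.pi = (n : ℝ) := by
      rw [← hn]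
      field_simp
    simp only [hj, this, Int.floor_intCast]
    exact hn
  -- injectivity
  have hinj : Set.InjOn j Z := by
    intro s hs t ht hst
    rcases lt_trichotomy s t with h | h | h
    · exfalso
      have h1 : θ s < θ t := hfwd s t h hs.2
      rw [← hjval s hs.2, ← hjval t ht.2] at h1
      have := (mul_lt_mul_iff_left₀ Real.pi_pos).mp h1
      exact_mod_cast absurd hst (ne_of_lt (by exact_mod_cast this))
    · exact h
    · exfalso
      have h1 : θ t < θ s := hfwd t s h ht.2
      rw [← hjval s hs.2, ← hjval t ht.2] at h1
      have := (mul_lt_mul_iff_left₀ Real.pi_pos).mp h1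
      exact_mod_cast absurd hst.symm (ne_of_lt (by exact_mod_cast this))
  set a : ℤ := ⌈θ 0 / Real.pi⌉ with haa
  set b : ℤ := ⌈θ x / Real.pi⌉ with hbb
  set f : ℤ := ⌊θ 0 / Real.pi⌋ with hff
  -- image bounds
  have himage_sub : j '' Z ⊆ Set.Ico a b := by
    rintro k ⟨s, hs, rfl⟩
    have hsx : θ s < θ x := hfwd s x hs.1.2 hs.2
    have hs0 : θ 0 ≤ θ s := by
      rcases eq_or_lt_of_le hs.1.1 with h | h
      · rw [← h]
      · exact (hbwd s 0 h hs.2).le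
    have hval := hjval s hs.2
    constructor
    · rw [haa]
      apply Int.ceil_le.mpr
      rw [div_le_iff₀ Real.pi_pos]
      linarith [hval]
    · rw [hbb]
      apply Int.lt_ceil.mpr
      rw [lt_div_iff₀ Real.pi_pos]
      linarith [hval]
  have hfin : Z.Finite :=
    Set.Finite.of_finite_image (Set.Finite.subset (Set.finite_Ico a b) himage_sub) hinj
  refine ⟨hfin, ?_⟩
  have himage_sup : Set.Ioo f b ⊆ j '' Z := by
    intro k hk
    have hk1 : θ 0 < (k : ℝ) * Real.pi := by
      have := Int.floor_lt.mp hk.1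
      rw [div_lt_iff₀ Real.pi_pos] at this
      linarith
    have hk2 : (k : ℝ) * Real.pi < θ x := by
      have := Int.lt_ceil.mp hk.2
      rw [lt_div_iff₀ Real.pi_pos] at this
      linarith
    obtain ⟨s, hs, hθs⟩ := intermediate_value_Ioo hx.le hcont.continuousOn
      (Set.mem_Ioo.mpr ⟨hk1, hk2⟩)
    have hsin : Real.sin (θ s) = 0 := by
      rw [hθs]
      exact Real.sin_int_mul_pi k
    refine ⟨s, ⟨⟨hs.1.le, hs.2⟩, hsin⟩, ?_⟩
    have : θ s / Real.pi = (k : ℝ) := by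
      rw [hθs]; field_simp
    simp only [hj, this, Int.floor_intCast]
  -- Claim 3 : θ 0 - π < θ x
  have hclaim3 : θ 0 - Real.pi < θ x := by
    by_contra hcon
    push_neg at hcon
    have hdiv : (θ 0 / Real.pi) * Real.pi = θ 0 := div_mul_cancel₀ _ Real.pi_ne_zero
    have hf1 : (f : ℝ) * Real.pi ≤ θ 0 := by
      have h9 := Int.floor_le (θ 0 / Real.pi)
      calc (f : ℝ) * Real.pi ≤ (θ 0 / Real.pi) * Real.pi :=
            mul_le_mul_of_nonneg_right (by rw [hff]; exact h9) Real.pi_pos.le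
        _ = θ 0 := hdiv
    have hf2 : θ 0 - Real.pi < (f : ℝ) * Real.pi := by
      have h9 := Int.sub_one_lt_floor (θ 0 / Real.pi)
      have h10 : (θ 0 / Real.pi - 1) * Real.pi < (f : ℝ) * Real.pi :=
        mul_lt_mul_of_pos_right (by rw [hff]; exact h9) Real.pi_pos
      have h11 : (θ 0 / Real.pi - 1) * Real.pi = θ 0 - Real.pi := by
        rw [sub_mul, hdiv, one_mul]
      linarith
    rcases eq_or_lt_of_le hf1 with h | h
    · have hsin : Real.sin (θ 0) = 0 := by rw [← h]; exact Real.sin_int_mul_pi f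
      have := hfwd 0 x hx hsin
      linarith [Real.pi_pos]
    · have hmem : (f:ℝ) * Real.pi ∈ Set.Ioo (θ x) (θ 0) := ⟨by linarith, h⟩
      obtain ⟨s, hs, hθs⟩ := intermediate_value_Ioo' hx.le hcont.continuousOn hmem
      have hsin : Real.sin (θ s) = 0 := by rw [hθs]; exact Real.sin_int_mul_pi f
      have := hfwd s x hs.2 hsin
      rw [hθs] at this
      linarith
  -- cardinality bounds
  set N := Z.ncard with hN
  have hcard_im : (j '' Z).ncard = N := Set.ncard_image_of_injOn hinj
  have hupper : N ≤ (b - a).toNat := by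
    have h1 := Set.ncard_le_ncard himage_sub (Set.finite_Ico a b)
    rw [hcard_im] at h1
    have h2 : (Set.Ico a b).ncard = (b - a).toNat := by
      rw [← Finset.coe_Ico, Set.ncard_coe_finset, Int.card_Ico]
    rwa [h2] at h1
  have hlower : (b - f - 1).toNat ≤ N := by
    have h1 := Set.ncard_le_ncard himage_sup (hfin.image j)
    rw [hcard_im] at h1
    have h2 : (Set.Ioo f b).ncard = (b - f - 1).toNat := by
      rw [← Finset.coe_Ioo, Set.ncard_coe_finset, Int.card_Ioo]
    rwa [h2] at h1
  -- translate to real inequalities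
  set u := θ 0 / Real.pi with hu
  set v := θ x / Real.pi with hv
  have hθ0 : θ 0 = u * Real.pi := by rw [hu]; field_simp
  have hθx : θ x = v * Real.pi := by rw [hv]; field_simp
  have hvu : -1 < v - u := by
    rw [hu, hv, div_sub_div_same]
    rw [neg_lt, ← neg_div, div_lt_one Real.pi_pos]
    linarith
  have ha1 : u ≤ (a:ℝ) := Int.le_ceil _
  have ha2 : (a:ℝ) < u + 1 := Int.ceil_lt_add_one _
  have hb1 : v ≤ (b:ℝ) := Int.le_ceil _
  have hb2 : (b:ℝ) < v + 1 := Int.ceil_lt_add_one _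
  have hf1 : (f:ℝ) ≤ u := Int.floor_le _
  have hf2 : u - 1 < (f:ℝ) := Int.sub_one_lt_floor _
  have hN1 : (N : ℝ) ≤ v - u + 2 := by
    have h3 : ((b - a).toNat : ℤ) = max (b - a) 0 := Int.toNat_eq_max _
    rcases le_or_gt (b - a) 0 with h | h
    · have : (b - a).toNat = 0 := Int.toNat_of_nonpos h
      have h4 : N = 0 := Nat.le_zero.mp (this ▸ hupper)
      rw [h4]
      push_cast
      linarith
    · have h5 : ((b - a).toNat : ℝ) = (b:ℝ) - a := by
        rw [← Int.cast_natCast, h3, max_eq_left h.le]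
        push_cast
        ring
      have h6 : (N:ℝ) ≤ ((b - a).toNat : ℝ) := by exact_mod_cast hupper
      rw [h5] at h6
      linarith
  have hN2 : v - u - 2 ≤ (N : ℝ) := by
    have h6 : ((b - f - 1).toNat : ℝ) ≤ (N:ℝ) := by exact_mod_cast hlower
    have h7 : (b:ℝ) - f - 1 ≤ ((b - f - 1).toNat : ℝ) := by
      have h3 : ((b - f - 1).toNat : ℤ) = max (b - f - 1) 0 := Int.toNat_eq_max _
      have : (b - f - 1 : ℤ) ≤ max (b - f - 1) 0 := le_max_left _ _
      have h8 : ((b - f - 1 : ℤ):ℝ) ≤ (((b - f - 1).toNat : ℤ):ℝ) := by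
        exact_mod_cast h3 ▸ this
      push_cast at h8 ⊢
      linarith
    linarith
  rw [abs_le]
  constructor
  · rw [hθ0, hθx]
    nlinarith [Real.pi_pos, hN2]
  · rw [hθ0, hθx]
    nlinarith [Real.pi_pos, hN1]

lemma self_mem_hull {E : Type*} [NormedAddCommGroup E] (f : ℝ → E) : f ∈ Hull f := by
  refine ⟨fun _ => 0, ?_⟩
  have h : TendstoUniformly (fun (_ : ℕ) x => f x) f atTop := by
    intro u hu
    filter_upwards with n x
    exact refl_mem_uniformity hu
  simpa using h


/-- geometric representation of the rotation number via zero counting. -/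
theorem rotation_number_zero_counting (p q w : ℝ → ℝ)
    (hp : APplus p) (hw : APplus w) (hq : BohrAP q) (lam ρ : ℝ)
    (hρ : ∃ θ : ℝ → ℝ, IsPruefer (fun x => (p x)⁻¹) q w lam θ ∧
      Tendsto (fun x => (θ x - θ 0) / x) atTop (𝓝 ρ))
    (φ : ℝ → ℝ) (hφ : IsSLSolution p q w lam φ) (hne : ∃ x : ℝ, φ x ≠ 0) :
    (∀ x : ℝ, 0 < x → {s ∈ Set.Ico (0:ℝ) x | φ s = 0}.Finite) ∧
    Tendsto (fun x : ℝ => Real.pi * (({s ∈ Set.Ico (0:ℝ) x | φ s = 0}).ncard : ℝ) / x)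
      atTop (𝓝 ρ) := by
  obtain ⟨θh, hθh_pruefer, hθh_lim⟩ := hρ
  have hppos : ∀ x, 0 < p x := fun x => hp.2 p (self_mem_hull p) x
  have hpc : Continuous p := hp.1.1
  have hwc : Continuous w := hw.1.1
  have hqc : Continuous q := hq.1
  set A : ℝ → ℝ := fun x => (p x)⁻¹ with hA_def
  set B : ℝ → ℝ := fun x => lam * w x - q x with hB_def
  have hA : Continuous A := hpc.inv₀ (fun x => (hppos x).ne')
  have hApos : ∀ x, 0 < A x := fun x => inv_pos.mpr (hppos x)
  have hB : Continuous B := (continuous_const.mul hwc).sub hqc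
  obtain ⟨hφ1, hφ2, hφ3⟩ := hφ
  set ψ : ℝ → ℝ := fun x => p x * deriv φ x with hψ_def
  have hψc : Continuous ψ := hφ2.continuous
  have hφc : Continuous φ := hφ1.continuous
  have hφd : ∀ x, HasDerivAt φ (deriv φ x) x :=
    fun x => (hφ1.differentiable (by norm_num) x).hasDerivAt
  have hψd : ∀ x, HasDerivAt ψ (deriv ψ x) x :=
    fun x => (hφ2.differentiable (by norm_num) x).hasDerivAt
  have hderivφ : ∀ x, deriv φ x = A x * ψ x := by
    intro x
    simp only [hA_def, hψ_def]
    field_simp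
    rw [mul_div_assoc, div_self (hppos x).ne', mul_one]
  have hderivψ : ∀ x, deriv ψ x = -(B x) * φ x := by
    intro x
    have h := hφ3 x
    simp only [hB_def, hψ_def]
    linarith [h]
  -- the complex path
  set z : ℝ → ℂ := fun x => (↑(ψ x) + ↑(φ x) * Complex.I : ℂ) with hz_def
  set zd : ℝ → ℂ := fun x => (↑(-(B x) * φ x) + ↑(A x * ψ x) * Complex.I : ℂ) with hzd_def
  have hzre : ∀ x, (z x).re = ψ x := by intro x; simp [hz_def]
  have hzim : ∀ x, (z x).im = φ x := by intro x; simp [hz_def]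
  have hz : ∀ x, HasDerivAt z (zd x) x := by
    intro x
    have h1 : HasDerivAt (fun y => (↑(ψ y) : ℂ)) (↑(deriv ψ x) : ℂ) x := (hψd x).ofReal_comp
    have h2 : HasDerivAt (fun y => (↑(φ y) * Complex.I : ℂ)) (↑(deriv φ x) * Complex.I) x :=
      (hφd x).ofReal_comp.mul_const Complex.I
    have h3 := h1.add h2
    rw [hderivψ x, hderivφ x] at h3
    exact h3
  have hzdc : Continuous zd := by
    apply Continuous.add
    · exact Complex.continuous_ofReal.comp ((hB.neg).mul hφc)
    · exact (Complex.continuous_ofReal.comp (hA.mul hψc)).mul continuous_const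
  -- nonvanishing
  have hz0 : ∀ x, z x ≠ 0 := by
    intro x₀ hx₀
    set v : ℝ → ℂ → ℂ := fun t y => (↑(-(B t) * y.im) + ↑(A t * y.re) * Complex.I : ℂ) with hv_def
    have hK := linear_field_lipschitz hA hB
    have hfz : ∀ t, HasDerivAt z (v t (z t)) t := by
      intro t
      have : v t (z t) = zd t := by
        simp only [hv_def, hzd_def, hzre, hzim]
      rw [this]
      exact hz t
    have hg0 : ∀ t, HasDerivAt (fun _ : ℝ => (0:ℂ)) (v t 0) t := by
      intro t
      have : v t 0 = 0 := by simp [hv_def]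
      rw [this]
      exact hasDerivAt_const t 0
    have heq0 : z x₀ = (fun _ : ℝ => (0:ℂ)) x₀ := hx₀
    have hall := ode_unique_global hK hfz hg0 heq0
    obtain ⟨x₁, hx₁⟩ := hne
    have : φ x₁ = 0 := by
      have h := hall x₁
      have := congrArg Complex.im h
      rwa [hzim] at this
    exact hx₁ this
  -- polar representation
  obtain ⟨θ, R, hRpos, hrep, hθd⟩ := polar_rep hz hzdc hz0
  have hψeq : ∀ x, ψ x = R x * Real.cos (θ x) := by
    intro x
    have := congrArg Complex.re (hrep x)
    rw [hzre] at this
    rw [this]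
    rw [mul_comm Complex.I]
    simp [Complex.mul_re, Complex.exp_ofReal_mul_I_re, Complex.exp_ofReal_mul_I_im]
  have hφeq : ∀ x, φ x = R x * Real.sin (θ x) := by
    intro x
    have := congrArg Complex.im (hrep x)
    rw [hzim] at this
    rw [this]
    rw [mul_comm Complex.I]
    simp [Complex.mul_im, Complex.exp_ofReal_mul_I_re, Complex.exp_ofReal_mul_I_im]
  -- Prüfer equation for θ
  have hθd' : ∀ x, HasDerivAt θ (A x * Real.cos (θ x) ^ 2 + B x * Real.sin (θ x) ^ 2) x := by
    intro x
    have h1 := hθd x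
    have hval : (zd x / z x).im = A x * Real.cos (θ x) ^ 2 + B x * Real.sin (θ x) ^ 2 := by
      rw [Complex.div_im]
      have h2 : Complex.normSq (z x) = R x ^ 2 := by
        rw [Complex.normSq_apply, hzre, hzim, hψeq, hφeq]
        nlinarith [Real.sin_sq_add_cos_sq (θ x)]
      have h3 : (zd x).im = A x * ψ x := by simp [hzd_def]
      have h4 : (zd x).re = -(B x) * φ x := by simp [hzd_def]
      rw [h2, h3, h4, hzre, hzim, hψeq, hφeq]
      have hR := (hRpos x).ne'
      field_simp
      ring
    rwa [hval] at h1
  -- positivity of derivative at zeros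
  have hposθ : ∀ s, Real.sin (θ s) = 0 →
      0 < A s * Real.cos (θ s) ^ 2 + B s * Real.sin (θ s) ^ 2 := by
    intro s hs
    have hc : Real.cos (θ s) ^ 2 = 1 := by
      have := Real.sin_sq_add_cos_sq (θ s)
      rw [hs] at this
      nlinarith
    rw [hs, hc]
    simpa using hApos s
  -- comparison with θh
  have hKc := pruefer_lipschitz hA hB
  set k : ℤ := ⌈(θh 0 - θ 0) / Real.pi⌉ with hk_def
  have hsqk : ((-1:ℝ) ^ k) ^ 2 = 1 := by
    rcases Int.even_or_odd k with he | ho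
    · rw [he.neg_one_zpow]; norm_num
    · rw [Odd.neg_one_zpow ho]; norm_num
  set θ1 : ℝ → ℝ := fun x => θ x + (k:ℝ) * Real.pi with hθ1_def
  have hθ1d : ∀ t, HasDerivAt θ1
      (A t * Real.cos (θ1 t) ^ 2 + B t * Real.sin (θ1 t) ^ 2) t := by
    intro t
    have h1 := (hθd' t).add_const ((k:ℝ) * Real.pi)
    have h2 : A t * Real.cos (θ1 t) ^ 2 + B t * Real.sin (θ1 t) ^ 2
        = A t * Real.cos (θ t) ^ 2 + B t * Real.sin (θ t) ^ 2 := by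
      simp only [hθ1_def]
      rw [Real.cos_add_int_mul_pi, Real.sin_add_int_mul_pi, mul_pow, mul_pow, hsqk, one_mul,
        one_mul]
    rw [h2]
    exact h1
  set θhp : ℝ → ℝ := fun x => θh x + Real.pi with hθhp_def
  have hθhd : ∀ t, HasDerivAt θh
      (A t * Real.cos (θh t) ^ 2 + B t * Real.sin (θh t) ^ 2) t := by
    intro t
    have := hθh_pruefer t
    simpa [hA_def, hB_def] using this
  have hθhpd : ∀ t, HasDerivAt θhp
      (A t * Real.cos (θhp t) ^ 2 + B t * Real.sin (θhp t) ^ 2) t := by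
    intro t
    have h1 := (hθhd t).add_const Real.pi
    have h2 : A t * Real.cos (θhp t) ^ 2 + B t * Real.sin (θhp t) ^ 2
        = A t * Real.cos (θh t) ^ 2 + B t * Real.sin (θh t) ^ 2 := by
      simp only [hθhp_def]
      rw [Real.cos_add_pi, Real.sin_add_pi, neg_pow, neg_pow]
      ring
    rw [h2]
    exact h1
  have h0a : θh 0 ≤ θ1 0 := by
    have h1 : (θh 0 - θ 0) / Real.pi ≤ (k:ℝ) := Int.le_ceil _
    have h2 : θh 0 - θ 0 ≤ (k:ℝ) * Real.pi := by
      rw [div_le_iff₀ Real.pi_pos] at h1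
      linarith
    simp only [hθ1_def]
    linarith
  have h0b : θ1 0 ≤ θhp 0 := by
    have h1 : (k:ℝ) < (θh 0 - θ 0) / Real.pi + 1 := Int.ceil_lt_add_one _
    have h2 : (k:ℝ) * Real.pi < θh 0 - θ 0 + Real.pi := by
      have := mul_lt_mul_of_pos_right h1 Real.pi_pos
      rw [add_mul, one_mul, div_mul_cancel₀ _ Real.pi_ne_zero] at this
      linarith
    simp only [hθ1_def, hθhp_def]
    linarith
  have cmp1 : ∀ x, 0 ≤ x → θh x ≤ θ1 x :=
    ode_comparison hKc hθhd hθ1d h0a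
  have cmp2 : ∀ x, 0 ≤ x → θ1 x ≤ θhp x :=
    ode_comparison hKc hθ1d hθhpd h0b
  have hbound : ∀ x, 0 ≤ x → |(θ x - θ 0) - (θh x - θh 0)| ≤ 2 * Real.pi := by
    intro x hx
    have c1 := cmp1 x hx
    have c2 := cmp2 x hx
    have c3 := cmp1 0 le_rfl
    have c4 := cmp2 0 le_rfl
    simp only [hθ1_def, hθhp_def] at c1 c2 c3 c4
    rw [abs_le]
    constructor <;> linarith [Real.pi_pos]
  -- sets of zeros
  have hsin_iff : ∀ s, (φ s = 0 ↔ Real.sin (θ s) = 0) := by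
    intro s
    rw [hφeq s]
    constructor
    · intro h
      rcases mul_eq_zero.mp h with h | h
      · exact absurd h (hRpos s).ne'
      · exact h
    · intro h
      rw [h, mul_zero]
  have hseteq : ∀ x : ℝ, {s ∈ Set.Ico (0:ℝ) x | φ s = 0}
      = {s ∈ Set.Ico (0:ℝ) x | Real.sin (θ s) = 0} := by
    intro x
    ext s
    simp only [Set.mem_setOf_eq, Set.mem_sep_iff]
    exact and_congr_right fun _ => hsin_iff s
  constructor
  · intro x hx
    rw [hseteq x]
    exact (zero_count_bound hθd' hposθ hx).1
  -- the limit
  · have hbig : ∀ x : ℝ, 0 < x →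
        |Real.pi * (({s ∈ Set.Ico (0:ℝ) x | φ s = 0}).ncard : ℝ) - (θh x - θh 0)|
          ≤ 4 * Real.pi := by
      intro x hx
      have h1 := (zero_count_bound hθd' hposθ hx).2
      rw [← hseteq x] at h1
      have h2 := hbound x hx.le
      set M := Real.pi * (({s ∈ Set.Ico (0:ℝ) x | φ s = 0}).ncard : ℝ)
      calc |M - (θh x - θh 0)|
          = |(M - (θ x - θ 0)) + ((θ x - θ 0) - (θh x - θh 0))| := by ring_nf
        _ ≤ |M - (θ x - θ 0)| + |(θ x - θ 0) - (θh x - θh 0)| := abs_add_le _ _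
        _ ≤ 2 * Real.pi + 2 * Real.pi := add_le_add h1 h2
        _ = 4 * Real.pi := by ring
    set N : ℝ → ℝ := fun x => (({s ∈ Set.Ico (0:ℝ) x | φ s = 0}).ncard : ℝ) with hN_def
    have hg : Tendsto (fun x : ℝ => 4 * Real.pi / x) atTop (𝓝 0) :=
      tendsto_const_nhds.div_atTop tendsto_id
    have h2 : Tendsto (fun x => (Real.pi * N x - (θh x - θh 0)) / x) atTop (𝓝 0) := by
      refine squeeze_zero_norm' ?_ hg
      filter_upwards [eventually_gt_atTop (0:ℝ)] with x hx
      have hb := hbig x hx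
      rw [Real.norm_eq_abs, abs_div, abs_of_pos hx]
      gcongr
    have heqf : (fun x : ℝ => Real.pi * N x / x)
        = fun x => (θh x - θh 0) / x + (Real.pi * N x - (θh x - θh 0)) / x := by
      funext x
      ring
    have h3 := hθh_lim.add h2
    rw [add_zero] at h3
    have hfin2 : (fun x : ℝ => Real.pi * (({s ∈ Set.Ico (0:ℝ) x | φ s = 0}).ncard : ℝ) / x)
        = fun x : ℝ => Real.pi * N x / x := rfl
    rw [hfin2, heqf]
    exact h3
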